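/- Let p be a prime and S = {s_1, …, s_n} the set of the first n natural numbers coprime to p. Then max_{x∈S} ν_p( Π_{s∈S, s≠x} (x − s) ) = f(n), where f(n) = Σ_{i=1}^∞ ⌊(n−1)/((p−1)p^{i−1})⌋. -/

import Mathlib

open Finset

def copF (p k : ℕ) : ℕ := k + 1 + k / (p - 1)

lemma copF_strictMono (p : ℕ) : StrictMono (copF p) := by
  intro a b h
  unfold copF
  have := Nat.div_le_div_right (c := p - 1) h.le
  omega

lemma copF_pos (p k : ℕ) : 0 < copF p k := by
  unfold copF
  exact Nat.add_pos_left (by omega) _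

lemma copF_not_dvd {p : ℕ} (hp2 : 2 ≤ p) (k : ℕ) : ¬ p ∣ copF p k := by
  have h1 : 0 < p - 1 := by omega
  have hd := Nat.div_add_mod k (p - 1)
  have hm : k % (p - 1) < p - 1 := Nat.mod_lt _ h1
  have h3 : (p - 1) * (k / (p - 1)) = p * (k / (p - 1)) - k / (p - 1) :=
    Nat.sub_one_mul p _
  have h4 : k / (p - 1) ≤ p * (k / (p - 1)) := Nat.le_mul_of_pos_left _ (by omega)
  have he : copF p k = p * (k / (p - 1)) + (k % (p - 1) + 1) := by unfold copF; omega
  rw [he]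
  intro hdvd
  have h2 : p ∣ k % (p - 1) + 1 := (Nat.dvd_add_right (dvd_mul_right p _)).mp hdvd
  have := Nat.le_of_dvd (by omega) h2
  omega

lemma copF_surj {p : ℕ} (hp2 : 2 ≤ p) {m : ℕ} (hm : 0 < m) (hdvd : ¬ p ∣ m) :
    ∃ k, copF p k = m := by
  refine ⟨(p - 1) * (m / p) + (m % p - 1), ?_⟩
  have h1 : 0 < p - 1 := by omega
  have hd := Nat.div_add_mod m p
  have hr : 0 < m % p := by
    rcases Nat.eq_zero_or_pos (m % p) with h | h
    · exact absurd (Nat.dvd_of_mod_eq_zero h) hdvd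
    · exact h
  have hrlt : m % p < p := Nat.mod_lt _ (by omega)
  have hlt : m % p - 1 < p - 1 := by omega
  have hdiv : ((p - 1) * (m / p) + (m % p - 1)) / (p - 1) = m / p := by
    rw [Nat.mul_add_div h1]
    simp [Nat.div_eq_of_lt hlt]
  have h3 : (p - 1) * (m / p) = p * (m / p) - m / p := Nat.sub_one_mul p _
  have h4 : m / p ≤ p * (m / p) := Nat.le_mul_of_pos_left _ (by omega)
  unfold copF
  rw [hdiv]
  omega

lemma copF_add {p : ℕ} (hp2 : 2 ≤ p) (k m : ℕ) :
    copF p (k + (p - 1) * m) = copF p k + p * m := by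
  have h1 : 0 < p - 1 := by omega
  unfold copF
  rw [Nat.add_mul_div_left _ _ h1]
  have h3 : (p - 1) * m = p * m - m := Nat.sub_one_mul p m
  have h4 : m ≤ p * m := Nat.le_mul_of_pos_left _ (by omega)
  omega

lemma copF_lt_pow {p : ℕ} (hp2 : 2 ≤ p) {k i : ℕ} (hk : k < (p - 1) * p ^ i) :
    copF p k < p ^ (i + 1) := by
  have h := copF_strictMono p hk
  have h0 : copF p ((p - 1) * p ^ i) = 1 + p ^ (i + 1) := by
    have := copF_add hp2 0 (p ^ i)
    have h1 : copF p 0 = 1 := by unfold copF; simp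
    rw [zero_add] at this
    rw [this, h1, pow_succ, mul_comm]
  have hne : copF p k ≠ p ^ (i + 1) := by
    intro he
    exact copF_not_dvd hp2 k (he ▸ dvd_pow_self p (Nat.succ_ne_zero i))
  omega

lemma copF_dvd_iff {p : ℕ} (hp2 : 2 ≤ p) {j k i : ℕ} (hjk : j ≤ k) :
    p ^ (i + 1) ∣ copF p k - copF p j ↔ (p - 1) * p ^ i ∣ k - j := by
  set q := (p - 1) * p ^ i with hqdef
  have hq : 0 < q := Nat.mul_pos (by omega) (pow_pos (by omega) i)
  have hmono : copF p j ≤ copF p k := (copF_strictMono p).monotone hjk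
  have decomp : ∀ a : ℕ, copF p a = copF p (a % q) + p ^ (i + 1) * (a / q) := by
    intro a
    have h1 : a = a % q + (p - 1) * (p ^ i * (a / q)) := by
      rw [← mul_assoc, ← hqdef]
      exact (Nat.mod_add_div a q).symm
    conv_lhs => rw [h1]
    rw [copF_add hp2, ← mul_assoc, ← pow_succ']
  constructor
  · intro h
    have hZ : (p : ℤ) ^ (i + 1) ∣ (copF p k : ℤ) - (copF p j : ℤ) := by
      have := Int.natCast_dvd_natCast.mpr h
      push_cast at this
      rwa [Nat.cast_sub hmono] at this  -- may need adjusting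
    have hZ' : (p : ℤ) ^ (i + 1) ∣ (copF p (k % q) : ℤ) - (copF p (j % q) : ℤ) := by
      have ek := decomp k
      have ej := decomp j
      have : (copF p (k % q) : ℤ) - (copF p (j % q) : ℤ) =
          ((copF p k : ℤ) - (copF p j : ℤ))
            - (p : ℤ) ^ (i + 1) * ((k / q : ℕ) - (j / q : ℕ)) := by
        rw [ek, ej]; push_cast; ring
      rw [this]
      exact dvd_sub hZ (Dvd.intro _ rfl)
    have hb : ∀ a : ℕ, copF p (a % q) < p ^ (i + 1) := fun a =>
      copF_lt_pow hp2 (Nat.mod_lt _ hq)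
    have heq : copF p (k % q) = copF p (j % q) := by
      have h1 := hb k
      have h2 := hb j
      have h3 := copF_pos p (k % q)
      have h4 := copF_pos p (j % q)
      have habs : ((copF p (k % q) : ℤ) - (copF p (j % q) : ℤ)).natAbs < p ^ (i + 1) := by
        omega
      have := Int.eq_zero_of_dvd_of_natAbs_lt_natAbs hZ' (by
        simpa [Int.natAbs_pow] using habs)
      omega
    have hmod : k % q = j % q := (copF_strictMono p).injective heq
    exact (Nat.modEq_iff_dvd' hjk).mp hmod.symm
  · rintro ⟨m, hm⟩
    have hk' : k = j + (p - 1) * (p ^ i * m) := by rw [← mul_assoc, ← hqdef]; omega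
    rw [hk', copF_add hp2, ← mul_assoc, ← pow_succ']
    simp

lemma count_cong {n k q : ℕ} (hk : k < n) (hq : 0 < q) :
    (((range n).erase k).filter (fun j => q ∣ (k - j) + (j - k))).card
      = k / q + (n - 1 - k) / q := by
  have hsplit : ((range n).erase k).filter (fun j => q ∣ (k - j) + (j - k)) =
      ((range n).filter (fun j => j < k ∧ q ∣ k - j)) ∪
      ((range n).filter (fun j => k < j ∧ q ∣ j - k)) := by
    ext j
    simp only [mem_filter, mem_union, mem_erase, mem_range]
    constructor
    · rintro ⟨⟨hjk, hjn⟩, hdvd⟩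
      rcases lt_or_gt_of_ne hjk with h | h
      · left
        refine ⟨hjn, h, ?_⟩
        have he : (k - j) + (j - k) = k - j := by omega
        rwa [he] at hdvd
      · right
        refine ⟨hjn, h, ?_⟩
        have he : (k - j) + (j - k) = j - k := by omega
        rwa [he] at hdvd
    · rintro (⟨hjn, h, hdvd⟩ | ⟨hjn, h, hdvd⟩)
      · refine ⟨⟨by omega, hjn⟩, ?_⟩
        have he : (k - j) + (j - k) = k - j := by omega
        rwa [he]
      · refine ⟨⟨by omega, hjn⟩, ?_⟩
        have he : (k - j) + (j - k) = j - k := by omega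
        rwa [he]
  rw [hsplit, card_union_of_disjoint]
  · congr 1
    · rw [← Nat.Ioc_filter_dvd_card_eq_div k q]
      apply Finset.card_bij' (fun j _ => k - j) (fun m _ => k - m)
      · intro a ha
        simp only [mem_filter, mem_range] at ha
        simp only [mem_filter, mem_Ioc]
        exact ⟨⟨by omega, by omega⟩, ha.2.2⟩
      · intro m hm
        simp only [mem_filter, mem_Ioc] at hm
        simp only [mem_filter, mem_range]
        refine ⟨by omega, by omega, ?_⟩
        have : k - (k - m) = m := by omega
        rw [this]; exact hm.2
      · intro a ha
        simp only [mem_filter, mem_range] at ha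
        omega
      · intro m hm
        simp only [mem_filter, mem_Ioc] at hm
        omega
    · rw [← Nat.Ioc_filter_dvd_card_eq_div (n - 1 - k) q]
      apply Finset.card_bij' (fun j _ => j - k) (fun m _ => k + m)
      · intro a ha
        simp only [mem_filter, mem_range] at ha
        simp only [mem_filter, mem_Ioc]
        exact ⟨⟨by omega, by omega⟩, ha.2.2⟩
      · intro m hm
        simp only [mem_filter, mem_Ioc] at hm
        simp only [mem_filter, mem_range]
        refine ⟨by omega, by omega, ?_⟩
        have : k + m - k = m := by omega
        rw [this]; exact hm.2
      · intro a ha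
        simp only [mem_filter, mem_range] at ha
        omega
      · intro m hm
        simp only [mem_filter, mem_Ioc] at hm
        omega
  · rw [Finset.disjoint_filter]
    rintro j _ ⟨h1, _⟩ ⟨h2, _⟩
    omega

lemma div_add_div_le {a b q : ℕ} (hq : 0 < q) : a / q + b / q ≤ (a + b) / q := by
  rw [Nat.le_div_iff_mul_le hq, add_mul]
  exact Nat.add_le_add (Nat.div_mul_le_self a q) (Nat.div_mul_le_self b q)

lemma copF_le (p a : ℕ) : copF p a ≤ 2 * a + 1 := by
  have := Nat.div_le_self a (p - 1)
  unfold copF; omega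

lemma copF_dvd_iff' {p : ℕ} (hp2 : 2 ≤ p) (i j k : ℕ) :
    p ^ (i + 1) ∣ (copF p k - copF p j) + (copF p j - copF p k) ↔
      (p - 1) * p ^ i ∣ (k - j) + (j - k) := by
  rcases le_total j k with h | h
  · have hm := (copF_strictMono p).monotone h
    have e1 : (copF p k - copF p j) + (copF p j - copF p k) = copF p k - copF p j := by omega
    have e2 : (k - j) + (j - k) = k - j := by omega
    rw [e1, e2]; exact copF_dvd_iff hp2 h
  · have hm := (copF_strictMono p).monotone h
    have e1 : (copF p k - copF p j) + (copF p j - copF p k) = copF p j - copF p k := by omega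
    have e2 : (k - j) + (j - k) = j - k := by omega
    rw [e1, e2]; exact copF_dvd_iff hp2 h

lemma val_eq {p : ℕ} (hp : p.Prime) {n k : ℕ} (hk : k < n) :
    padicValInt p (∏ s ∈ (((range n).image (copF p)).erase (copF p k)),
        ((copF p k : ℤ) - (s : ℤ)))
      = ∑ i ∈ Finset.range n, (k / ((p - 1) * p ^ i) + (n - 1 - k) / ((p - 1) * p ^ i)) := by
  have hp2 := hp.two_le
  have hinj : Function.Injective (copF p) := (copF_strictMono p).injective
  rw [← Finset.image_erase hinj, Finset.prod_image (fun a _ b _ h => hinj h)]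
  set E := (range n).erase k with hE
  set D : ℕ → ℕ := fun j => (copF p k - copF p j) + (copF p j - copF p k) with hD
  have habs : ∀ j, ((copF p k : ℤ) - (copF p j : ℤ)).natAbs = D j := by
    intro j; simp only [hD]; omega
  have hD0 : ∀ j ∈ E, D j ≠ 0 := by
    intro j hj
    have hne : j ≠ k := (Finset.mem_erase.mp hj).1
    rcases lt_or_gt_of_ne hne with h | h
    · have := copF_strictMono p h
      simp only [hD]; omega
    · have := copF_strictMono p h
      simp only [hD]; omega
  have hDle : ∀ j ∈ E, D j ≤ p ^ n := by
    intro j hj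
    have hjn : j < n := by
      have := (Finset.mem_erase.mp hj).2; simpa using this
    have l1 := copF_le p k
    have l2 := copF_le p j
    have l3 := copF_pos p k
    have l4 := copF_pos p j
    have h2n : 2 * n - 2 < 2 ^ n := by
      have := Nat.lt_two_pow_self (n := n - 1)
      have h2 : 2 ^ (n - 1 + 1) ≤ 2 ^ n := Nat.pow_le_pow_right (by omega) (by omega)
      rw [pow_succ] at h2
      omega
    have hpow : 2 ^ n ≤ p ^ n := Nat.pow_le_pow_left hp2 n
    simp only [hD]; omega
  -- convert padicValInt to sum of counts
  unfold padicValInt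
  have hprod : (∏ j ∈ E, ((copF p k : ℤ) - (copF p j : ℤ))).natAbs = ∏ j ∈ E, D j := by
    rw [show (∏ j ∈ E, ((copF p k : ℤ) - (copF p j : ℤ))).natAbs
        = Int.natAbsHom (∏ j ∈ E, ((copF p k : ℤ) - (copF p j : ℤ))) from rfl,
      map_prod]
    exact Finset.prod_congr rfl fun j _ => habs j
  rw [hprod, ← Nat.factorization_def _ hp, Nat.factorization_prod hD0,
    Finsupp.finset_sum_apply]
  have hterm : ∀ j ∈ E, (D j).factorization p
      = ((Finset.Icc 1 n).filter (fun i => p ^ i ∣ D j)).card := by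
    intro j hj
    rw [Nat.factorization_eq_card_pow_dvd _ hp, Nat.Ico_filter_pow_dvd_eq hp (hD0 j hj) (hDle j hj)]
  rw [Finset.sum_congr rfl hterm]
  have hswap : ∑ j ∈ E, ((Finset.Icc 1 n).filter (fun i => p ^ i ∣ D j)).card
      = ∑ i ∈ Finset.Icc 1 n, ∑ j ∈ E, (if p ^ i ∣ D j then 1 else 0) := by
    simp only [Finset.card_filter]
    exact Finset.sum_comm
  rw [hswap]
  have hIcc : Finset.Icc 1 n = Finset.Ico 1 (n + 1) := rfl
  rw [hIcc, Finset.sum_Ico_eq_sum_range]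
  simp only [Nat.add_sub_cancel]
  apply Finset.sum_congr rfl
  intro i _
  have hq : 0 < (p - 1) * p ^ i := Nat.mul_pos (by omega) (pow_pos (by omega) i)
  rw [← count_cong hk hq, Finset.card_filter]
  apply Finset.sum_congr rfl
  intro j _
  have := copF_dvd_iff' hp2 i j k
  have e : 1 + i = i + 1 := by omega
  rw [e]
  simp only [hD]
  rw [if_congr this rfl rfl]

theorem max_valuation_first_coprimes (p : ℕ) (hp : p.Prime) (n : ℕ) (hn : 0 < n)
    (S : Finset ℕ) (hcard : S.card = n)
    (hpos : ∀ s ∈ S, 0 < s) (hcop : ∀ s ∈ S, ¬ p ∣ s)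
    (hfirst : ∀ m : ℕ, 0 < m → ¬ p ∣ m → m ∉ S → ∀ s ∈ S, s < m) :
    S.sup' (Finset.card_pos.mp (hcard ▸ hn))
        (fun x => padicValInt p (∏ s ∈ S.erase x, ((x : ℤ) - (s : ℤ)))) =
      ∑ i ∈ Finset.range n, (n - 1) / ((p - 1) * p ^ i) := by
  have hp2 := hp.two_le
  have hinj : Function.Injective (copF p) := (copF_strictMono p).injective
  set T : Finset ℕ := (range n).image (copF p) with hT
  have hTcard : T.card = n := by
    rw [hT, Finset.card_image_of_injective _ hinj, Finset.card_range]
  have hST : S = T := by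
    by_contra hne
    have hSsub : ¬ S ⊆ T := fun hsub =>
      hne (Finset.eq_of_subset_of_card_le hsub (by omega))
    have hTsub : ¬ T ⊆ S := fun hsub =>
      hne ((Finset.eq_of_subset_of_card_le hsub (by omega)).symm)
    obtain ⟨a, haS, haT⟩ := Finset.not_subset.mp hSsub
    obtain ⟨b, hbT, hbS⟩ := Finset.not_subset.mp hTsub
    obtain ⟨kb, hkb, rfl⟩ := Finset.mem_image.mp hbT
    rw [Finset.mem_range] at hkb
    have hab : a < copF p kb :=
      hfirst _ (copF_pos p kb) (copF_not_dvd hp2 kb) hbS a haS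
    obtain ⟨ka, hka⟩ := copF_surj hp2 (hpos a haS) (hcop a haS)
    have hka_ge : n ≤ ka := by
      by_contra h
      exact haT (Finset.mem_image.mpr ⟨ka, Finset.mem_range.mpr (by omega), hka⟩)
    have : copF p kb < a := hka ▸ copF_strictMono p (lt_of_lt_of_le hkb hka_ge)
    omega
  apply le_antisymm
  · apply Finset.sup'_le
    intro x hx
    have hxT : x ∈ T := hST ▸ hx
    obtain ⟨k, hkn, rfl⟩ := Finset.mem_image.mp hxT
    rw [Finset.mem_range] at hkn
    rw [hST, val_eq hp hkn]
    apply Finset.sum_le_sum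
    intro i _
    have hq : 0 < (p - 1) * p ^ i := Nat.mul_pos (by omega) (pow_pos (by omega) i)
    have h1 := div_add_div_le (a := k) (b := n - 1 - k) hq
    have he : k + (n - 1 - k) = n - 1 := by omega
    rwa [he] at h1
  · have h1S : copF p 0 ∈ S := by
      rw [hST]
      exact Finset.mem_image.mpr ⟨0, Finset.mem_range.mpr hn, rfl⟩
    refine le_trans (le_of_eq ?_) (Finset.le_sup'
      (fun x => padicValInt p (∏ s ∈ S.erase x, ((x : ℤ) - (s : ℤ)))) h1S)
    rw [hST, val_eq hp hn]
    simp
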